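/- Let R = ℂ[x,y,z] and W = xyz. For m ≥ 0, consider the ℤ/2-graded free R-module P with odd generators C₀,…,C_{2m} (where indices C₁,…,C_{2m-1} also appear; all Cᵢ, i = 0,…,2m, are odd) and even generators D₀,…,D_{2m}, with odd map δ defined by (setting the area parameter T^A = 1): δ(C₀) = zD₀; δ(D₀) = xyC₀; δ(C₁) = D₁ − D₀; δ(D₁) = xyzC₁ + xyC₀; δ(C_{2k}) = zx(−yD_{2k} + D_{2k−1}) for 1 ≤ k ≤ m; δ(D_{2k}) = −C_{2k} + x(zC_{2k−1} + C_{2k−2}) for 1 ≤ k ≤ m; δ(C_{2k+1}) = D_{2k+1} + xyD_{2k} − xD_{2k−1} for 1 ≤ k ≤ m−1; δ(D_{2k+1}) = xyzC_{2k+1} + xyC_{2k} for 1 ≤ k ≤ m−1. Then δ² = xyz·id, so (P, δ) is a matrix factorization of xyz. -/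

import Mathlib

noncomputable section

open MvPolynomial Matrix

/-- `R = ℂ[x,y,z]`. -/
abbrev Rpoly : Type := MvPolynomial (Fin 3) ℂ

def xP : Rpoly := X 0
def yP : Rpoly := X 1
def zP : Rpoly := X 2

/-- `Aent i j` = coefficient of `D_j` in `δ(C_i)` (with the area parameter `T^A = 1`):
`δ(C₀) = z D₀`; `δ(C₁) = D₁ − D₀`;
`δ(C_{2k}) = zx(−y D_{2k} + D_{2k−1})` for `1 ≤ k ≤ m`;
`δ(C_{2k+1}) = D_{2k+1} + xy D_{2k} − x D_{2k−1}` for `1 ≤ k ≤ m−1`. -/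
def Aent : ℕ → ℕ → Rpoly := fun i j =>
  if i = 0 then (if j = 0 then zP else 0)
  else if i = 1 then (if j = 1 then 1 else if j = 0 then -1 else 0)
  else if i % 2 = 0 then
    (if j = i then -(xP * yP * zP) else if j + 1 = i then zP * xP else 0)
  else
    (if j = i then 1 else if j + 1 = i then xP * yP else if j + 2 = i then -xP else 0)

/-- `Bent i j` = coefficient of `C_j` in `δ(D_i)`:
`δ(D₀) = xy C₀`; `δ(D₁) = xyz C₁ + xy C₀`;
`δ(D_{2k}) = −C_{2k} + x(z C_{2k−1} + C_{2k−2})` for `1 ≤ k ≤ m`;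
`δ(D_{2k+1}) = xyz C_{2k+1} + xy C_{2k}` for `1 ≤ k ≤ m−1`. -/
def Bent : ℕ → ℕ → Rpoly := fun i j =>
  if i = 0 then (if j = 0 then xP * yP else 0)
  else if i = 1 then (if j = 1 then xP * yP * zP else if j = 0 then xP * yP else 0)
  else if i % 2 = 0 then
    (if j = i then -1 else if j + 1 = i then xP * zP else if j + 2 = i then xP else 0)
  else
    (if j = i then xP * yP * zP else if j + 1 = i then xP * yP else 0)

/-- The matrix of `δ` on the odd generators `C₀, …, C_{2m}`. -/
def Amat (m : ℕ) : Matrix (Fin (2 * m + 1)) (Fin (2 * m + 1)) Rpoly :=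
  fun i j => Aent (i : ℕ) (j : ℕ)

/-- The matrix of `δ` on the even generators `D₀, …, D_{2m}`. -/
def Bmat (m : ℕ) : Matrix (Fin (2 * m + 1)) (Fin (2 * m + 1)) Rpoly :=
  fun i j => Bent (i : ℕ) (j : ℕ)

/-- The odd endomorphism `δ` of `P = (⊕ᵢ R·Cᵢ) ⊕ (⊕ᵢ R·Dᵢ)`, with a general
element represented by its pair of coordinate vectors `(c, d)`:
`δ(c, d) = (Bᵀ·d, Aᵀ·c)` (so that `δ(Cᵢ) = Σⱼ Aᵢⱼ Dⱼ` and `δ(Dᵢ) = Σⱼ Bᵢⱼ Cⱼ`). -/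
def deltaBig (m : ℕ) :
    ((Fin (2 * m + 1) → Rpoly) × (Fin (2 * m + 1) → Rpoly)) →ₗ[Rpoly]
      ((Fin (2 * m + 1) → Rpoly) × (Fin (2 * m + 1) → Rpoly)) :=
  LinearMap.prod
    ((Matrix.toLin' (Bmat m)ᵀ) ∘ₗ LinearMap.snd Rpoly _ _)
    ((Matrix.toLin' (Amat m)ᵀ) ∘ₗ LinearMap.fst Rpoly _ _)

section AuxMF
lemma sum_red1 (n : ℕ) (f : ℕ → Rpoly) (h : 0 < n)
    (hz : ∀ k, 1 ≤ k → f k = 0) :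
    ∑ k ∈ Finset.range n, f k = f 0 := by
  rw [← Finset.sum_subset (s₁ := ({0} : Finset ℕ))
      (by intro x hx; simp at hx ⊢; omega)
      (by intro x hx hx'; simp at hx hx'; exact hz x (by omega))]
  exact Finset.sum_singleton f 0

lemma sum_red2 (n : ℕ) (f : ℕ → Rpoly) (h : 1 < n)
    (hz : ∀ k, 2 ≤ k → f k = 0) :
    ∑ k ∈ Finset.range n, f k = f 0 + f 1 := by
  rw [← Finset.sum_subset (s₁ := ({0, 1} : Finset ℕ))
      (by intro x hx; simp at hx ⊢; omega)
      (by intro x hx hx'; simp at hx hx'; exact hz x (by omega))]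
  rw [show ({0,1} : Finset ℕ) = insert 0 {1} from rfl,
    Finset.sum_insert (by simp), Finset.sum_singleton]

lemma sum_red3 (n i : ℕ) (f : ℕ → Rpoly) (hi : i + 2 < n)
    (hz : ∀ k, k < i ∨ i + 2 < k → f k = 0) :
    ∑ k ∈ Finset.range n, f k = f i + f (i+1) + f (i+2) := by
  rw [← Finset.sum_subset (s₁ := ({i, i+1, i+2} : Finset ℕ))
      (by intro x hx; simp at hx ⊢; omega)
      (by intro x hx hx'; simp at hx hx'; exact hz x (by omega))]
  rw [show ({i, i+1, i+2} : Finset ℕ) = insert i (insert (i+1) {i+2}) from rfl,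
    Finset.sum_insert (by simp), Finset.sum_insert (by simp), Finset.sum_singleton, add_assoc]

lemma Aent_row0 (j : ℕ) : Aent 0 j = if j = 0 then zP else 0 := by
  unfold Aent; split_ifs <;> first | rfl | contradiction | omega
lemma Aent_row1 (j : ℕ) : Aent 1 j = if j = 1 then 1 else if j = 0 then -1 else 0 := by
  unfold Aent; split_ifs <;> first | rfl | contradiction | omega
lemma Aent_roweven (i j : ℕ) (h : i % 2 = 0) (h2 : 2 ≤ i) :
    Aent i j = if j = i then -(xP * yP * zP) else if j + 1 = i then zP * xP else 0 := by
  unfold Aent; split_ifs <;> first | rfl | contradiction | omega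
lemma Aent_rowodd (i j : ℕ) (h : i % 2 = 1) (h3 : 3 ≤ i) :
    Aent i j = if j = i then 1 else if j + 1 = i then xP * yP
      else if j + 2 = i then -xP else 0 := by
  unfold Aent; split_ifs <;> first | rfl | contradiction | omega
lemma Bent_row0 (j : ℕ) : Bent 0 j = if j = 0 then xP * yP else 0 := by
  unfold Bent; split_ifs <;> first | rfl | contradiction | omega
lemma Bent_row1 (j : ℕ) : Bent 1 j = if j = 1 then xP * yP * zP else if j = 0 then xP * yP else 0 := by
  unfold Bent; split_ifs <;> first | rfl | contradiction | omega
lemma Bent_roweven (i j : ℕ) (h : i % 2 = 0) (h2 : 2 ≤ i) :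
    Bent i j = if j = i then -1 else if j + 1 = i then xP * zP
      else if j + 2 = i then xP else 0 := by
  unfold Bent; split_ifs <;> first | rfl | contradiction | omega
lemma Bent_rowodd (i j : ℕ) (h : i % 2 = 1) :
    Bent i j = if j = i then xP * yP * zP else if j + 1 = i then xP * yP else 0 := by
  unfold Bent; split_ifs <;> first | rfl | contradiction | omega

lemma Aent_zero {i k : ℕ} (h : k < i - 2 ∨ i < k) : Aent i k = 0 := by
  unfold Aent; split_ifs <;> first | rfl | omega
lemma Bent_zero {i k : ℕ} (h : k < i - 2 ∨ i < k) : Bent i k = 0 := by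
  unfold Bent; split_ifs <;> first | rfl | omega

lemma BA_row0 (n j : ℕ) (hi : 0 < n) (hj : j < n) :
    ∑ k ∈ Finset.range n, Bent 0 k * Aent k j = if 0 = j then xP * yP * zP else 0 := by
  rw [sum_red1 n _ hi (fun k hk => by rw [Bent_zero (by omega)]; ring)]
  rw [Bent_row0, Aent_row0]
  split_ifs <;> first | contradiction | (exfalso; omega) | ring

lemma BA_row1 (n j : ℕ) (hi : 1 < n) (hj : j < n) :
    ∑ k ∈ Finset.range n, Bent 1 k * Aent k j = if 1 = j then xP * yP * zP else 0 := by
  rw [sum_red2 n _ hi (fun k hk => by rw [Bent_zero (by omega)]; ring)]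
  rw [Bent_row1, Bent_row1, Aent_row0, Aent_row1]
  split_ifs <;> first | contradiction | (exfalso; omega) | ring

set_option maxHeartbeats 1000000 in
lemma BA_row2 (n j : ℕ) (hi : 2 < n) (hj : j < n) :
    ∑ k ∈ Finset.range n, Bent 2 k * Aent k j = if 2 = j then xP * yP * zP else 0 := by
  rw [sum_red3 n 0 _ (by omega) (fun c hc => by rw [Bent_zero (by omega)]; ring)]
  rw [show (0:ℕ)+1 = 1 from rfl, show (0:ℕ)+2 = 2 from rfl]
  rw [Bent_roweven 2 0 (by omega) (by omega), Bent_roweven 2 1 (by omega) (by omega),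
    Bent_roweven 2 2 (by omega) (by omega),
    Aent_row0, Aent_row1, Aent_roweven 2 j (by omega) (by omega)]
  split_ifs <;> first | contradiction | (exfalso; omega) | ring

set_option maxHeartbeats 2000000 in
lemma BA_roweven (n k j : ℕ) (hi : 2*k+4 < n) (hj : j < n) :
    ∑ c ∈ Finset.range n, Bent (2*k+4) c * Aent c j = if 2*k+4 = j then xP * yP * zP else 0 := by
  rw [sum_red3 n (2*k+2) _ (by omega) (fun c hc => by rw [Bent_zero (by omega)]; ring)]
  rw [show 2*k+2+1 = 2*k+3 from rfl, show 2*k+2+2 = 2*k+4 from rfl]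
  rw [Bent_roweven (2*k+4) (2*k+2) (by omega) (by omega),
    Bent_roweven (2*k+4) (2*k+3) (by omega) (by omega),
    Bent_roweven (2*k+4) (2*k+4) (by omega) (by omega),
    Aent_roweven (2*k+2) j (by omega) (by omega),
    Aent_rowodd (2*k+3) j (by omega) (by omega),
    Aent_roweven (2*k+4) j (by omega) (by omega)]
  split_ifs <;> first | contradiction | (exfalso; omega) | ring

set_option maxHeartbeats 2000000 in
lemma BA_rowodd (n k j : ℕ) (hi : 2*k+3 < n) (hj : j < n) :
    ∑ c ∈ Finset.range n, Bent (2*k+3) c * Aent c j = if 2*k+3 = j then xP * yP * zP else 0 := by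
  rw [sum_red3 n (2*k+1) _ (by omega) (fun c hc => by rw [Bent_zero (by omega)]; ring)]
  rw [show 2*k+1+1 = 2*k+2 from rfl, show 2*k+1+2 = 2*k+3 from rfl]
  rw [show Bent (2*k+3) (2*k+1) = 0 from by unfold Bent; split_ifs <;> first | rfl | contradiction | (exfalso; omega),
    zero_mul,
    Bent_rowodd (2*k+3) (2*k+2) (by omega), Bent_rowodd (2*k+3) (2*k+3) (by omega),
    Aent_roweven (2*k+2) j (by omega) (by omega),
    Aent_rowodd (2*k+3) j (by omega) (by omega)]
  split_ifs <;> first | contradiction | (exfalso; omega) | ring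

lemma BAkey (n i j : ℕ) (hi : i < n) (hj : j < n) :
    ∑ k ∈ Finset.range n, Bent i k * Aent k j = if i = j then xP * yP * zP else 0 := by
  obtain ⟨c, hc | hc⟩ := Nat.even_or_odd' i
  · rcases c with _ | _ | c
    · rw [show 2*0 = 0 from rfl] at hc; subst hc; exact BA_row0 n j hi hj
    · rw [show 2*1 = 2 from rfl] at hc; subst hc; exact BA_row2 n j hi hj
    · rw [show 2*(c+2) = 2*c+4 from by ring] at hc; subst hc; exact BA_roweven n c j hi hj
  · rcases c with _ | c
    · rw [show 2*0+1 = 1 from rfl] at hc; subst hc; exact BA_row1 n j hi hj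
    · rw [show 2*(c+1)+1 = 2*c+3 from by ring] at hc; subst hc; exact BA_rowodd n c j hi hj

lemma AB_row0 (n j : ℕ) (hi : 0 < n) (hj : j < n) :
    ∑ k ∈ Finset.range n, Aent 0 k * Bent k j = if 0 = j then xP * yP * zP else 0 := by
  rw [sum_red1 n _ hi (fun k hk => by rw [Aent_zero (by omega)]; ring)]
  rw [Aent_row0, Bent_row0]
  split_ifs <;> first | contradiction | (exfalso; omega) | ring

lemma AB_row1 (n j : ℕ) (hi : 1 < n) (hj : j < n) :
    ∑ k ∈ Finset.range n, Aent 1 k * Bent k j = if 1 = j then xP * yP * zP else 0 := by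
  rw [sum_red2 n _ hi (fun k hk => by rw [Aent_zero (by omega)]; ring)]
  rw [Aent_row1, Aent_row1, Bent_row0, Bent_rowodd 1 j (by omega)]
  split_ifs <;> first | contradiction | (exfalso; omega) | ring

set_option maxHeartbeats 2000000 in
lemma AB_roweven (n k j : ℕ) (hi : 2*k+2 < n) (hj : j < n) :
    ∑ c ∈ Finset.range n, Aent (2*k+2) c * Bent c j = if 2*k+2 = j then xP * yP * zP else 0 := by
  rw [sum_red3 n (2*k) _ (by omega) (fun c hc => by rw [Aent_zero (by omega)]; ring)]
  rw [Aent_roweven (2*k+2) (2*k) (by omega) (by omega),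
    Aent_roweven (2*k+2) (2*k+1) (by omega) (by omega),
    Aent_roweven (2*k+2) (2*k+2) (by omega) (by omega),
    Bent_rowodd (2*k+1) j (by omega),
    Bent_roweven (2*k+2) j (by omega) (by omega)]
  split_ifs <;> first | contradiction | (exfalso; omega) | ring

set_option maxHeartbeats 2000000 in
lemma AB_rowodd (n k j : ℕ) (hi : 2*k+3 < n) (hj : j < n) :
    ∑ c ∈ Finset.range n, Aent (2*k+3) c * Bent c j = if 2*k+3 = j then xP * yP * zP else 0 := by
  rw [sum_red3 n (2*k+1) _ (by omega) (fun c hc => by rw [Aent_zero (by omega)]; ring)]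
  rw [show 2*k+1+1 = 2*k+2 from rfl, show 2*k+1+2 = 2*k+3 from rfl]
  rw [Aent_rowodd (2*k+3) (2*k+1) (by omega) (by omega),
    Aent_rowodd (2*k+3) (2*k+2) (by omega) (by omega),
    Aent_rowodd (2*k+3) (2*k+3) (by omega) (by omega),
    Bent_rowodd (2*k+1) j (by omega),
    Bent_roweven (2*k+2) j (by omega) (by omega),
    Bent_rowodd (2*k+3) j (by omega)]
  split_ifs <;> first | contradiction | (exfalso; omega) | ring

lemma ABkey (n i j : ℕ) (hi : i < n) (hj : j < n) :
    ∑ k ∈ Finset.range n, Aent i k * Bent k j = if i = j then xP * yP * zP else 0 := by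
  obtain ⟨c, hc | hc⟩ := Nat.even_or_odd' i
  · rcases c with _ | c
    · rw [show 2*0 = 0 from rfl] at hc; subst hc; exact AB_row0 n j hi hj
    · rw [show 2*(c+1) = 2*c+2 from by ring] at hc; subst hc; exact AB_roweven n c j hi hj
  · rcases c with _ | c
    · rw [show 2*0+1 = 1 from rfl] at hc; subst hc; exact AB_row1 n j hi hj
    · rw [show 2*(c+1)+1 = 2*c+3 from by ring] at hc; subst hc; exact AB_rowodd n c j hi hj

lemma ABmat (m : ℕ) :
    Amat m * Bmat m = (xP * yP * zP) • (1 : Matrix (Fin (2*m+1)) (Fin (2*m+1)) Rpoly) := by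
  apply Matrix.ext; intro i j
  rw [Matrix.mul_apply]
  show ∑ k : Fin (2*m+1), Aent (i:ℕ) (k:ℕ) * Bent (k:ℕ) (j:ℕ) = _
  rw [Fin.sum_univ_eq_sum_range (fun k => Aent (i:ℕ) k * Bent k (j:ℕ)) (2*m+1),
    ABkey _ _ _ i.isLt j.isLt]
  simp only [Matrix.smul_apply, Matrix.one_apply, Fin.val_eq_val]
  split_ifs <;> simp

lemma BAmat (m : ℕ) :
    Bmat m * Amat m = (xP * yP * zP) • (1 : Matrix (Fin (2*m+1)) (Fin (2*m+1)) Rpoly) := by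
  apply Matrix.ext; intro i j
  rw [Matrix.mul_apply]
  show ∑ k : Fin (2*m+1), Bent (i:ℕ) (k:ℕ) * Aent (k:ℕ) (j:ℕ) = _
  rw [Fin.sum_univ_eq_sum_range (fun k => Bent (i:ℕ) k * Aent k (j:ℕ)) (2*m+1),
    BAkey _ _ _ i.isLt j.isLt]
  simp only [Matrix.smul_apply, Matrix.one_apply, Fin.val_eq_val]
  split_ifs <;> simp

end AuxMF

/-- `δ² = xyz · id`, i.e. the ℤ/2-graded free module with odd
generators `C₀,…,C_{2m}`, even generators `D₀,…,D_{2m}` and the odd map `δ`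
defined by the formulas above is a matrix factorization of `W = xyz`. -/
theorem stmt13 (m : ℕ) :
    ∀ p : (Fin (2 * m + 1) → Rpoly) × (Fin (2 * m + 1) → Rpoly),
      deltaBig m (deltaBig m p) = (xP * yP * zP) • p := by
  intro p
  have hA : (Bmat m)ᵀ * (Amat m)ᵀ
      = (xP*yP*zP) • (1 : Matrix (Fin (2*m+1)) (Fin (2*m+1)) Rpoly) := by
    rw [← Matrix.transpose_mul, ABmat, Matrix.transpose_smul, Matrix.transpose_one]
  have hB : (Amat m)ᵀ * (Bmat m)ᵀ
      = (xP*yP*zP) • (1 : Matrix (Fin (2*m+1)) (Fin (2*m+1)) Rpoly) := by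
    rw [← Matrix.transpose_mul, BAmat, Matrix.transpose_smul, Matrix.transpose_one]
  simp only [deltaBig, LinearMap.prod_apply, Function.prod_apply, LinearMap.coe_comp, Function.comp_apply,
    LinearMap.snd_apply, LinearMap.fst_apply, Matrix.toLin'_apply, Matrix.mulVec_mulVec]
  rw [hA, hB, Matrix.smul_mulVec, Matrix.smul_mulVec,
    Matrix.one_mulVec, Matrix.one_mulVec]
  rfl

end
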